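/- In a DAG satisfying the Markov condition with distribution P, d-separation implies conditional independence: if Z d-separates M and N in G, then M ⊥ N | Z in P (soundness of d-separation, stated for the special case where P factorizes according to G over finitely many finite-valued variables). -/

import Mathlib

open scoped Classical

/-- A directed graph is acyclic if no vertex reaches itself by a nonempty directed walk. -/
def Acyclic {V : Type*} (adj : V → V → Prop) : Prop :=
  ∀ v, ¬ Relation.TransGen adj v v

/-- `Desc adj x y` : `y` is a (proper) descendant of `x`. -/
def Desc {V : Type*} (adj : V → V → Prop) (x y : V) : Prop :=
  Relation.TransGen adj x y

/-- An (undirected) path between `M` and `N` in the directed graph `adj`,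
represented as the list of its vertices. -/
def IsTrail {V : Type*} (adj : V → V → Prop) (p : List V) (M N : V) : Prop :=
  p.Chain' (fun a b => adj a b ∨ adj b a) ∧ p.head? = some M ∧ p.getLast? = some N ∧
    p.Nodup ∧ 2 ≤ p.length

/-- Interior position `i` of the path `p` is a collider (both adjacent edges point into it). -/
def ColliderAt {V : Type*} (adj : V → V → Prop) (p : List V) (i : ℕ) : Prop :=
  ∃ a x b, p[i-1]? = some a ∧ p[i]? = some x ∧ p[i+1]? = some b ∧ adj a x ∧ adj b x

/-- The path `p` is blocked by the conditioning set `Z`: some interior node is a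
non-collider belonging to `Z`, or a collider such that neither it nor any of its
descendants belongs to `Z`. -/
def Blocked {V : Type*} (adj : V → V → Prop) (Z : Set V) (p : List V) : Prop :=
  ∃ i x, 0 < i ∧ i + 1 < p.length ∧ p[i]? = some x ∧
    ((¬ ColliderAt adj p i ∧ x ∈ Z) ∨
     (ColliderAt adj p i ∧ x ∉ Z ∧ ∀ d, Desc adj x d → d ∉ Z))

/-- `Z` d-separates `M` and `N`: every path between them is blocked. -/
def DSep {V : Type*} (adj : V → V → Prop) (Z : Set V) (M N : V) : Prop :=
  ∀ p, IsTrail adj p M N → Blocked adj Z p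

/-- d-separation of sets of nodes. -/
def DSepS {V : Type*} (adj : V → V → Prop) (Z A B : Set V) : Prop :=
  ∀ M ∈ A, ∀ N ∈ B, DSep adj Z M N

/-- Marginal of the joint pmf `p` on the variable set `S`, evaluated at configuration `f`. -/
noncomputable def Marg {V : Type*} [Fintype V] [DecidableEq V] {vals : V → Type*}
    [∀ v, Fintype (vals v)] (p : (∀ v, vals v) → ℝ) (S : Finset V)
    (f : ∀ v, vals v) : ℝ :=
  ∑ u : ∀ v, vals v, if ∀ v ∈ S, u v = f v then p u else 0

/-- Conditional independence of the variable sets `A` and `B` given `C`,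
phrased via the factorization of marginals of the joint pmf `p`. -/
def CI {V : Type*} [Fintype V] [DecidableEq V] {vals : V → Type*}
    [∀ v, Fintype (vals v)] (p : (∀ v, vals v) → ℝ) (A B C : Finset V) : Prop :=
  ∀ f, Marg p (A ∪ B ∪ C) f * Marg p C f = Marg p (A ∪ C) f * Marg p (B ∪ C) f

namespace DSound


variable {V : Type*} [Fintype V] [DecidableEq V] {vals : V → Type*} [∀ v, Fintype (vals v)]

/-- Sum of `F` over all configurations that agree with `f` outside `D`. -/
noncomputable def SumOver (D : Finset V) (F : (∀ v, vals v) → ℝ) (f : ∀ v, vals v) : ℝ :=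
  ∑ u : ∀ v, vals v, if ∀ v, v ∉ D → u v = f v then F u else 0

lemma marg_eq_sumover (p : (∀ v, vals v) → ℝ) (S : Finset V) (f : ∀ v, vals v) :
    Marg p S f = SumOver Sᶜ p f := by
  unfold Marg SumOver
  refine Finset.sum_congr rfl fun u _ => if_congr ?_ rfl rfl
  constructor
  · intro h v hv; exact h v (by simpa using hv)
  · intro h v hv; exact h v (by simpa using hv)

lemma sumover_empty (F : (∀ v, vals v) → ℝ) (f : ∀ v, vals v) :
    SumOver (∅ : Finset V) F f = F f := by
  unfold SumOver
  have h : ∀ u : (∀ v, vals v), (∀ v, v ∉ (∅ : Finset V) → u v = f v) ↔ u = f := by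
    intro u
    constructor
    · intro h; funext v; exact h v (by simp)
    · intro h v _; rw [h]
  rw [Finset.sum_congr rfl fun u _ => if_congr (h u) rfl rfl]
  simp

lemma sumover_union {D₁ D₂ : Finset V} (h : Disjoint D₁ D₂) (F : (∀ v, vals v) → ℝ)
    (f : ∀ v, vals v) :
    SumOver (D₁ ∪ D₂) F f = SumOver D₁ (fun g => SumOver D₂ F g) f := by
  unfold SumOver
  have step1 : ∀ u : (∀ v, vals v),
      (if ∀ v, v ∉ D₁ → u v = f v then
        (∑ w : ∀ v, vals v, if ∀ v, v ∉ D₂ → w v = u v then F w else 0) else 0)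
      = ∑ w : ∀ v, vals v,
          if (∀ v, v ∉ D₁ → u v = f v) ∧ (∀ v, v ∉ D₂ → w v = u v) then F w else 0 := by
    intro u
    split_ifs with hc
    · refine Finset.sum_congr rfl fun w _ => ?_
      by_cases h2 : ∀ v, v ∉ D₂ → w v = u v
      · rw [if_pos h2, if_pos ⟨hc, h2⟩]
      · rw [if_neg h2, if_neg (fun hh => h2 hh.2)]
    · refine (Finset.sum_eq_zero fun w _ => ?_).symm
      rw [if_neg (fun hh => hc hh.1)]
  rw [Finset.sum_congr rfl fun u _ => step1 u, Finset.sum_comm]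
  refine Finset.sum_congr rfl fun w _ => ?_
  by_cases hC : ∀ v, v ∉ D₁ ∪ D₂ → w v = f v
  · rw [if_pos hC]
    set u₀ : ∀ v, vals v := fun v => if v ∈ D₂ then f v else w v with hu₀
    rw [Finset.sum_eq_single u₀]
    · rw [if_pos]
      constructor
      · intro v hv
        by_cases hv2 : v ∈ D₂
        · simp [hu₀, hv2]
        · simp only [hu₀, hv2, if_false]
          exact hC v (by simp [hv, hv2])
      · intro v hv; simp [hu₀, hv]
    · intro u _ hne
      rw [if_neg]
      rintro ⟨h1, h2⟩
      apply hne
      funext v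
      by_cases hv2 : v ∈ D₂
      · have hv1 : v ∉ D₁ := fun hv1 => (Finset.disjoint_left.mp h) hv1 hv2
        simp [hu₀, hv2, h1 v hv1]
      · simp [hu₀, hv2, (h2 v hv2).symm]
    · intro habs; exact absurd (Finset.mem_univ u₀) habs
  · rw [if_neg hC]
    refine (Finset.sum_eq_zero fun u _ => ?_).symm
    rw [if_neg]
    rintro ⟨h1, h2⟩
    apply hC
    intro v hv
    simp only [Finset.mem_union, not_or] at hv
    rw [h2 v hv.2, h1 v hv.1]

lemma sumover_nonneg {D : Finset V} {F : (∀ v, vals v) → ℝ} (hF : ∀ u, 0 ≤ F u)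
    (f : ∀ v, vals v) : 0 ≤ SumOver D F f := by
  apply Finset.sum_nonneg; intro u _
  split_ifs
  · exact hF u
  · exact le_refl 0

lemma sumover_pull {D : Finset V} {G F : (∀ v, vals v) → ℝ}
    (hG : ∀ u u', (∀ v, v ∉ D → u v = u' v) → G u = G u') (f : ∀ v, vals v) :
    SumOver D (fun u => G u * F u) f = G f * SumOver D F f := by
  unfold SumOver
  rw [Finset.mul_sum]
  refine Finset.sum_congr rfl fun u _ => ?_
  split_ifs with hc
  · show G u * F u = G f * F u
    rw [hG u f hc]
  · ring

lemma sumover_congr {D : Finset V} {F G : (∀ v, vals v) → ℝ} (h : ∀ u, F u = G u)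
    (f : ∀ v, vals v) : SumOver D F f = SumOver D G f := by
  unfold SumOver
  refine Finset.sum_congr rfl fun u _ => ?_
  rw [h u]

/-- If `F` is `B`-local and `f, f'` agree on `B \ D`, the sums agree. -/
lemma sumover_local {D B : Finset V} {F : (∀ v, vals v) → ℝ}
    (hF : ∀ u u', (∀ v ∈ B, u v = u' v) → F u = F u')
    {f f' : ∀ v, vals v} (hff : ∀ v ∈ B, v ∉ D → f v = f' v) :
    SumOver D F f = SumOver D F f' := by
  unfold SumOver
  rw [← Finset.sum_filter, ← Finset.sum_filter]
  refine Finset.sum_bij (i := fun u _ => fun v => if v ∈ D then u v else f' v) ?_ ?_ ?_ ?_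
  · intro u hu
    simp only [Finset.mem_filter, Finset.mem_univ, true_and] at hu ⊢
    intro v hv; simp [hv]
  · intro u1 hu1 u2 hu2 heq
    simp only [Finset.mem_filter, Finset.mem_univ, true_and] at hu1 hu2
    funext v
    by_cases hv : v ∈ D
    · have := congrFun heq v
      simpa [hv] using this
    · rw [hu1 v hv, hu2 v hv]
  · intro w hw
    simp only [Finset.mem_filter, Finset.mem_univ, true_and] at hw
    refine ⟨fun v => if v ∈ D then w v else f v, ?_, ?_⟩
    · simp only [Finset.mem_filter, Finset.mem_univ, true_and]
      intro v hv; simp [hv]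
    · funext v
      by_cases hv : v ∈ D
      · simp [hv]
      · simp only [hv, if_false]
        exact (hw v hv).symm
  · intro u hu
    simp only [Finset.mem_filter, Finset.mem_univ, true_and] at hu
    apply hF
    intro v hv
    by_cases hvD : v ∈ D
    · simp [hvD]
    · simp only [hvD, if_false]
      rw [hu v hvD]; exact hff v hv hvD

/-- Sum over a single coordinate. -/
lemma sumover_single {X : V} (F : (∀ v, vals v) → ℝ) (f : ∀ v, vals v) :
    SumOver {X} F f = ∑ x : vals X, F (Function.update f X x) := by
  unfold SumOver
  rw [← Finset.sum_filter]
  refine Finset.sum_bij (i := fun u _ => u X) ?_ ?_ ?_ ?_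
  · intro u _; exact Finset.mem_univ _
  · intro u1 hu1 u2 hu2 heq
    simp only [Finset.mem_filter, Finset.mem_univ, true_and] at hu1 hu2
    funext v
    by_cases hv : v = X
    · subst hv; exact heq
    · rw [hu1 v (by simp [hv]), hu2 v (by simp [hv])]
  · intro x _
    refine ⟨Function.update f X x, ?_, ?_⟩
    · simp only [Finset.mem_filter, Finset.mem_univ, true_and]
      intro v hv
      rw [Function.update_of_ne (by simpa using hv)]
    · simp
  · intro u hu
    simp only [Finset.mem_filter, Finset.mem_univ, true_and] at hu
    congr 1
    funext v
    by_cases hv : v = X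
    · subst hv; simp
    · rw [Function.update_of_ne hv]
      exact hu v (by simp [hv])


section PartA

variable {adj : V → V → Prop} {Pa : V → Finset V} {p : (∀ v, vals v) → ℝ}

lemma marg_nonneg (hnn : ∀ u, 0 ≤ p u) (S : Finset V) (f : ∀ v, vals v) :
    0 ≤ Marg p S f := by
  apply Finset.sum_nonneg; intro u _
  split_ifs
  · exact hnn u
  · exact le_refl 0

lemma marg_mono (hnn : ∀ u, 0 ≤ p u) {S S' : Finset V} (h : S ⊆ S') (f : ∀ v, vals v) :
    Marg p S' f ≤ Marg p S f := by
  apply Finset.sum_le_sum; intro u _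
  split_ifs with h1 h2
  · exact le_refl _
  · exact absurd (fun v hv => h1 v (h hv)) h2
  · exact hnn u
  · exact le_refl 0

lemma marg_empty (hsum : ∑ u, p u = 1) (f : ∀ v, vals v) :
    Marg p (∅ : Finset V) f = 1 := by
  unfold Marg
  rw [← hsum]
  refine Finset.sum_congr rfl fun u _ => ?_
  rw [if_pos (fun v hv => absurd hv (Finset.notMem_empty v))]

lemma marg_univ (f : ∀ v, vals v) : Marg p (Finset.univ : Finset V) f = p f := by
  unfold Marg
  have h : ∀ u : (∀ v, vals v), (∀ v ∈ (Finset.univ : Finset V), u v = f v) ↔ u = f := by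
    intro u
    constructor
    · intro h; funext v; exact h v (Finset.mem_univ v)
    · intro h v _; rw [h]
  rw [Finset.sum_congr rfl fun u _ => if_congr (h u) rfl rfl]
  simp

lemma marg_local {S : Finset V} {f f' : ∀ v, vals v} (h : ∀ v ∈ S, f v = f' v) :
    Marg p S f = Marg p S f' := by
  unfold Marg
  refine Finset.sum_congr rfl fun u _ => if_congr ?_ rfl rfl
  constructor
  · intro hh v hv; rw [← h v hv]; exact hh v hv
  · intro hh v hv; rw [h v hv]; exact hh v hv

lemma marg_marg {S S' : Finset V} (hS : S ⊆ S') (f : ∀ v, vals v) :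
    Marg p S f = SumOver (S' \ S) (Marg p S') f := by
  have hset : Sᶜ = (S' \ S) ∪ S'ᶜ := by
    ext v
    simp only [Finset.mem_compl, Finset.mem_union, Finset.mem_sdiff]
    constructor
    · intro hv
      by_cases hv' : v ∈ S'
      · exact Or.inl ⟨hv', hv⟩
      · exact Or.inr hv'
    · rintro (⟨_, hv⟩ | hv')
      · exact hv
      · exact fun hv => hv' (hS hv)
  have hdisj : Disjoint (S' \ S) S'ᶜ := by
    rw [Finset.disjoint_left]
    intro a ha ha'
    exact (Finset.mem_compl.mp ha') (Finset.mem_sdiff.mp ha).1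
  rw [marg_eq_sumover, hset, sumover_union hdisj]
  refine sumover_congr (fun g => ?_) f
  rw [marg_eq_sumover]

lemma marg_insert_sum {X : V} {S : Finset V} (hX : X ∉ S) (f : ∀ v, vals v) :
    ∑ x : vals X, Marg p (insert X S) (Function.update f X x) = Marg p S f := by
  have h1 : Marg p S f = SumOver ((insert X S) \ S) (Marg p (insert X S)) f :=
    marg_marg (Finset.subset_insert X S) f
  have h2 : (insert X S) \ S = {X} := by
    ext v
    simp only [Finset.mem_sdiff, Finset.mem_insert, Finset.mem_singleton]
    constructor
    · rintro ⟨hv | hv, hv2⟩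
      · exact hv
      · exact absurd hv hv2
    · rintro rfl; exact ⟨Or.inl rfl, hX⟩
  rw [h1, h2, sumover_single]

lemma le_marg (hnn : ∀ u, 0 ≤ p u) (S : Finset V) (u : ∀ v, vals v) :
    p u ≤ Marg p S u := by
  unfold Marg
  have := Finset.single_le_sum (f := fun w => if ∀ v ∈ S, w v = u v then p w else 0)
    (fun w _ => by split_ifs; exacts [hnn w, le_refl 0]) (Finset.mem_univ u)
  simpa using this

/-- The canonical conditional of `X` given its parents. -/
noncomputable def kk (Pa : V → Finset V) (p : (∀ v, vals v) → ℝ) (X : V)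
    (u : ∀ v, vals v) : ℝ :=
  Marg p (insert X (Pa X)) u / Marg p (Pa X) u

lemma kk_nonneg (hnn : ∀ u, 0 ≤ p u) (X : V) (u : ∀ v, vals v) : 0 ≤ kk Pa p X u :=
  div_nonneg (marg_nonneg hnn _ _) (marg_nonneg hnn _ _)

lemma kk_local {X : V} {u u' : ∀ v, vals v} (h : ∀ v ∈ insert X (Pa X), u v = u' v) :
    kk Pa p X u = kk Pa p X u' := by
  unfold kk
  rw [marg_local h, marg_local (fun v hv => h v (Finset.mem_insert_of_mem hv))]

def Ancestral (Pa : V → Finset V) (W : Finset V) : Prop := ∀ Y ∈ W, Pa Y ⊆ W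

/-- Tail sum. -/
noncomputable def TT (Pa : V → Finset V) (p : (∀ v, vals v) → ℝ) (W : Finset V)
    (u : ∀ v, vals v) : ℝ :=
  SumOver Wᶜ (fun w => ∏ Y ∈ Wᶜ, kk Pa p Y w) u

lemma TT_nonneg (hnn : ∀ u, 0 ≤ p u) (W : Finset V) (u : ∀ v, vals v) :
    0 ≤ TT Pa p W u :=
  sumover_nonneg (fun w => Finset.prod_nonneg fun Y _ => kk_nonneg hnn Y w) u

lemma TT_univ (u : ∀ v, vals v) : TT Pa p (Finset.univ : Finset V) u = 1 := by
  unfold TT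
  rw [Finset.compl_univ]
  rw [sumover_empty]
  simp

lemma TT_rec {X : V} {W : Finset V} (hX : X ∉ W) (hPaX : Pa X ⊆ W) (u : ∀ v, vals v) :
    TT Pa p W u = ∑ x : vals X,
      kk Pa p X (Function.update u X x) * TT Pa p (insert X W) (Function.update u X x) := by
  set C : Finset V := (insert X W)ᶜ with hC
  have hXc : X ∉ C := by simp [hC]
  have hset : Wᶜ = {X} ∪ C := by
    ext v
    simp only [hC, Finset.mem_compl, Finset.mem_union, Finset.mem_singleton, Finset.mem_insert,
      not_or]
    constructor
    · intro hv
      by_cases hvX : v = X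
      · exact Or.inl hvX
      · exact Or.inr ⟨hvX, hv⟩
    · rintro (rfl | ⟨_, hv⟩)
      · exact hX
      · exact hv
  have hset2 : Wᶜ = insert X C := by
    rw [hset]; ext v; simp [Finset.mem_insert]
  have hdisj : Disjoint ({X} : Finset V) C := by
    rw [Finset.disjoint_left]
    intro a ha ha'
    rw [Finset.mem_singleton] at ha
    subst ha
    exact hXc ha'
  have hprod : ∀ w : (∀ v, vals v),
      (∏ Y ∈ ({X} ∪ C : Finset V), kk Pa p Y w)
        = kk Pa p X w * ∏ Y ∈ C, kk Pa p Y w := by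
    intro w
    rw [← hset, hset2, Finset.prod_insert hXc]
  have hG : ∀ w w', (∀ v, v ∉ C → w v = w' v) → kk Pa p X w = kk Pa p X w' := by
    intro w w' hww
    refine kk_local (fun v hv => hww v ?_)
    simp only [hC, Finset.mem_compl, not_not]
    exact Finset.insert_subset_insert X hPaX hv
  have e0 : TT Pa p W u = SumOver ({X} ∪ C) (fun w => ∏ Y ∈ ({X} ∪ C : Finset V),
      kk Pa p Y w) u := by
    unfold TT; rw [← hset]
  calc TT Pa p W u
      = SumOver ({X} ∪ C) (fun w => ∏ Y ∈ ({X} ∪ C : Finset V), kk Pa p Y w) u := e0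
    _ = SumOver {X} (fun g => SumOver C
          (fun w => ∏ Y ∈ ({X} ∪ C : Finset V), kk Pa p Y w) g) u := sumover_union hdisj _ u
    _ = SumOver {X} (fun g => kk Pa p X g
          * SumOver C (fun w => ∏ Y ∈ C, kk Pa p Y w) g) u := by
        refine sumover_congr (fun g => ?_) u
        rw [sumover_congr hprod g]
        exact sumover_pull (G := kk Pa p X) (F := fun w => ∏ Y ∈ C, kk Pa p Y w) hG g
    _ = ∑ x : vals X, kk Pa p X (Function.update u X x)
          * SumOver C (fun w => ∏ Y ∈ C, kk Pa p Y w) (Function.update u X x) :=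
        sumover_single _ u
    _ = ∑ x : vals X, kk Pa p X (Function.update u X x)
          * TT Pa p (insert X W) (Function.update u X x) := rfl

lemma kk_rowsum (hnn : ∀ u, 0 ≤ p u) (hacyc : Acyclic adj) (hPa : ∀ X v, v ∈ Pa X ↔ adj v X)
    (X : V) (u : ∀ v, vals v) :
    ∑ x : vals X, kk Pa p X (Function.update u X x)
      = if Marg p (Pa X) u = 0 then 0 else 1 := by
  have hXPa : X ∉ Pa X := fun h => hacyc X (Relation.TransGen.single ((hPa X X).mp h))
  have hden : ∀ x : vals X, Marg p (Pa X) (Function.update u X x) = Marg p (Pa X) u := by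
    intro x
    exact marg_local (fun v hv => Function.update_of_ne (ne_of_mem_of_not_mem hv hXPa) x u)
  have : ∑ x : vals X, kk Pa p X (Function.update u X x)
      = (∑ x : vals X, Marg p (insert X (Pa X)) (Function.update u X x)) / Marg p (Pa X) u := by
    rw [Finset.sum_div]
    refine Finset.sum_congr rfl fun x _ => ?_
    unfold kk
    rw [hden x]
  rw [this, marg_insert_sum hXPa]
  split_ifs with h0
  · rw [h0, div_zero]
  · exact div_self h0

lemma TT_le_one (hnn : ∀ u, 0 ≤ p u) (hacyc : Acyclic adj)
    (hPa : ∀ X v, v ∈ Pa X ↔ adj v X) :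
    ∀ (n : ℕ) (W : Finset V), Wᶜ.card ≤ n → ∀ u, TT Pa p W u ≤ 1 := by
  intro n
  induction n with
  | zero =>
    intro W hcard u
    have : Wᶜ = ∅ := Finset.card_eq_zero.mp (Nat.le_zero.mp hcard)
    have hW : W = Finset.univ := by
      rw [← Finset.compl_empty, ← this, compl_compl]
    rw [hW, TT_univ]
  | succ n ih =>
    intro W hcard u
    by_cases hWu : W = Finset.univ
    · rw [hWu, TT_univ]
    · have hne : Wᶜ.Nonempty := by
        rw [Finset.nonempty_iff_ne_empty]
        intro h
        exact hWu (by rw [← compl_compl W, h, Finset.compl_empty])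
      -- pick a minimal element of the complement
      obtain ⟨X, hXmem, hXmin⟩ := Finset.exists_min_image Wᶜ
        (fun X => (Wᶜ.filter (fun y => Desc adj y X)).card) hne
      have hXnoPar : ∀ y ∈ Wᶜ, ¬ adj y X := by
        intro y hy hadj
        have hsub : Wᶜ.filter (fun z => Desc adj z y) ⊂ Wᶜ.filter (fun z => Desc adj z X) := by
          constructor
          · intro z hz
            simp only [Finset.mem_filter] at hz ⊢
            exact ⟨hz.1, Relation.TransGen.tail hz.2 hadj⟩
          · intro hsub'
            have hyin : y ∈ Wᶜ.filter (fun z => Desc adj z X) := by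
              simp only [Finset.mem_filter]
              exact ⟨hy, Relation.TransGen.single hadj⟩
            have := hsub' hyin
            simp only [Finset.mem_filter] at this
            exact hacyc y this.2
        exact absurd (hXmin y hy) (not_le.mpr (Finset.card_lt_card hsub))
      have hPaX : Pa X ⊆ W := by
        intro v hv
        by_contra hvW
        exact hXnoPar v (Finset.mem_compl.mpr hvW) ((hPa X v).mp hv)
      have hXW : X ∉ W := Finset.mem_compl.mp hXmem
      rw [TT_rec hXW hPaX u]
      have hcard' : (insert X W)ᶜ.card ≤ n := by
        have : (insert X W)ᶜ = Wᶜ.erase X := by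
          ext v
          simp only [Finset.mem_compl, Finset.mem_erase, Finset.mem_insert, not_or]
        rw [this]
        have := Finset.card_erase_of_mem hXmem
        omega
      calc ∑ x : vals X, kk Pa p X (Function.update u X x)
            * TT Pa p (insert X W) (Function.update u X x)
          ≤ ∑ x : vals X, kk Pa p X (Function.update u X x) * 1 := by
            apply Finset.sum_le_sum
            intro x _
            exact mul_le_mul_of_nonneg_left (ih (insert X W) hcard' _) (kk_nonneg hnn X _)
        _ = ∑ x : vals X, kk Pa p X (Function.update u X x) := by simp
        _ ≤ 1 := by
            rw [kk_rowsum hnn hacyc hPa]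
            split_ifs
            · exact zero_le_one
            · exact le_refl 1

lemma marg_eq_prod_mul_TT (hfact : ∀ u, p u = ∏ X : V, kk Pa p X u)
    {W : Finset V} (hanc : Ancestral Pa W) (u : ∀ v, vals v) :
    Marg p W u = (∏ Y ∈ W, kk Pa p Y u) * TT Pa p W u := by
  rw [marg_eq_sumover]
  rw [sumover_congr (fun w => hfact w) u]
  have hsplit : ∀ w : (∀ v, vals v),
      (∏ X : V, kk Pa p X w) = (∏ Y ∈ W, kk Pa p Y w) * ∏ Y ∈ Wᶜ, kk Pa p Y w :=
    fun w => (Finset.prod_mul_prod_compl W _).symm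
  rw [sumover_congr hsplit u]
  unfold TT
  exact sumover_pull (G := fun w => ∏ Y ∈ W, kk Pa p Y w)
    (F := fun w => ∏ Y ∈ Wᶜ, kk Pa p Y w)
    (fun w w' hww => Finset.prod_congr rfl fun Y hY =>
    kk_local (fun v hv => hww v (by
      simp only [Finset.mem_compl, not_not]
      rcases Finset.mem_insert.mp hv with rfl | hv'
      · exact hY
      · exact hanc Y hY hv'))) u

/-- The key factorization lemma: on an ancestral set, the marginal is the product of the
canonical conditionals. -/
lemma marg_ancestral (hnn : ∀ u, 0 ≤ p u) (hsum : ∑ u, p u = 1) (hacyc : Acyclic adj)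
    (hPa : ∀ X v, v ∈ Pa X ↔ adj v X) (hfact : ∀ u, p u = ∏ X : V, kk Pa p X u) :
    ∀ (W : Finset V), Ancestral Pa W → ∀ u, Marg p W u = ∏ Y ∈ W, kk Pa p Y u := by
  intro W
  induction W using Finset.strongInduction with
  | _ W ih =>
    intro hanc u
    rcases Finset.eq_empty_or_nonempty W with rfl | hne
    · rw [marg_empty hsum, Finset.prod_empty]
    · -- pick a maximal element of W
      obtain ⟨X, hXmem, hXmax⟩ := Finset.exists_min_image W
        (fun X => (W.filter (fun y => Desc adj X y)).card) hne
      have hXnoChild : ∀ y ∈ W, ¬ adj X y := by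
        intro y hy hadj
        have hsub : W.filter (fun z => Desc adj y z) ⊂ W.filter (fun z => Desc adj X z) := by
          constructor
          · intro z hz
            simp only [Finset.mem_filter] at hz ⊢
            exact ⟨hz.1, Relation.TransGen.head hadj hz.2⟩
          · intro hsub'
            have hyin : y ∈ W.filter (fun z => Desc adj X z) := by
              simp only [Finset.mem_filter]
              exact ⟨hy, Relation.TransGen.single hadj⟩
            have := hsub' hyin
            simp only [Finset.mem_filter] at this
            exact hacyc y this.2
        exact absurd (hXmax y hy) (not_le.mpr (Finset.card_lt_card hsub))
      set W'' := W.erase X with hW''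
      have hss : W'' ⊂ W := Finset.erase_ssubset hXmem
      have hanc'' : Ancestral Pa W'' := by
        intro Y hY
        have hYW : Y ∈ W := Finset.mem_of_mem_erase hY
        intro v hv
        have hvW : v ∈ W := hanc Y hYW hv
        refine Finset.mem_erase.mpr ⟨?_, hvW⟩
        rintro rfl
        exact hXnoChild Y hYW ((hPa Y v).mp hv)
      have hXPa : Pa X ⊆ W'' := by
        intro v hv
        have hvW : v ∈ W := hanc X hXmem hv
        refine Finset.mem_erase.mpr ⟨?_, hvW⟩
        rintro rfl
        exact hacyc v (Relation.TransGen.single ((hPa v v).mp hv))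
      have hXW'' : X ∉ W'' := Finset.notMem_erase X W
      have hXPaX : X ∉ Pa X := fun h => hXW'' (hXPa h)
      have ihW : ∀ u, Marg p W'' u = ∏ Y ∈ W'', kk Pa p Y u := ih W'' hss hanc''
      have hWsub : W'' ⊆ W := Finset.erase_subset X W
      have hprodW : ∀ u', (∏ Y ∈ W, kk Pa p Y u')
          = (∏ Y ∈ W'', kk Pa p Y u') * kk Pa p X u' :=
        fun u' => (Finset.prod_erase_mul W _ hXmem).symm
      by_cases hc1 : Marg p W'' u = 0
      · have hle : Marg p W u ≤ Marg p W'' u := marg_mono hnn hWsub u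
        have h0 : Marg p W u = 0 :=
          le_antisymm (hc1 ▸ hle) (marg_nonneg hnn _ _)
        rw [h0, hprodW u, ← ihW u, hc1, zero_mul]
      · have hW''pos : 0 < Marg p W'' u :=
          lt_of_le_of_ne (marg_nonneg hnn _ _) (Ne.symm hc1)
        have hPapos : 0 < Marg p (Pa X) u :=
          lt_of_lt_of_le hW''pos (marg_mono hnn hXPa u)
        have hFamW : insert X (Pa X) ⊆ W :=
          Finset.insert_subset hXmem (hXPa.trans hWsub)
        by_cases hc2 : Marg p (insert X (Pa X)) u = 0
        · have hle : Marg p W u ≤ Marg p (insert X (Pa X)) u := marg_mono hnn hFamW u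
          have h0 : Marg p W u = 0 :=
            le_antisymm (hc2 ▸ hle) (marg_nonneg hnn _ _)
          have hk0 : kk Pa p X u = 0 := by
            unfold kk; rw [hc2, zero_div]
          rw [h0, hprodW u, hk0, mul_zero]
        · have hFampos : 0 < Marg p (insert X (Pa X)) u :=
            lt_of_le_of_ne (marg_nonneg hnn _ _) (Ne.symm hc2)
          have hkpos : 0 < kk Pa p X u := div_pos hFampos hPapos
          have hprodne : (∏ Y ∈ W'', kk Pa p Y u) ≠ 0 := by
            rw [← ihW u]; exact hc1
          have hT1 : TT Pa p W'' u = 1 := by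
            have hid := marg_eq_prod_mul_TT hfact hanc'' u
            rw [ihW u] at hid
            rcases mul_right_eq_self₀.mp hid.symm with h | h
            · exact h
            · exact absurd h hprodne
          have hrec := TT_rec (p := p) hXW'' hXPa u
          rw [Finset.insert_erase hXmem] at hrec
          have hrow : ∑ x : vals X, kk Pa p X (Function.update u X x) = 1 := by
            rw [kk_rowsum hnn hacyc hPa, if_neg (ne_of_gt hPapos)]
          have hTle : ∀ x : vals X, TT Pa p W (Function.update u X x) ≤ 1 :=
            fun x => TT_le_one hnn hacyc hPa (Wᶜ.card) W (le_refl _) _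
          have hTnn : ∀ x : vals X, 0 ≤ TT Pa p W (Function.update u X x) :=
            fun x => TT_nonneg hnn W _
          have hzero : ∑ x : vals X,
              kk Pa p X (Function.update u X x) * (1 - TT Pa p W (Function.update u X x))
                = 0 := by
            have : ∀ x : vals X,
                kk Pa p X (Function.update u X x) * (1 - TT Pa p W (Function.update u X x))
                = kk Pa p X (Function.update u X x)
                  - kk Pa p X (Function.update u X x) * TT Pa p W (Function.update u X x) := by
              intro x; ring
            rw [Finset.sum_congr rfl fun x _ => this x, Finset.sum_sub_distrib, hrow, ← hrec,
              hT1, sub_self]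
          have hterm := (Finset.sum_eq_zero_iff_of_nonneg (fun x _ =>
            mul_nonneg (kk_nonneg hnn X _) (sub_nonneg.mpr (hTle x)))).mp hzero
          have hux := hterm (u X) (Finset.mem_univ _)
          rw [Function.update_eq_self] at hux
          have hTW1 : TT Pa p W u = 1 := by
            rcases mul_eq_zero.mp hux with h | h
            · exact absurd h (ne_of_gt hkpos)
            · linarith
          rw [marg_eq_prod_mul_TT hfact hanc u, hTW1, mul_one]

lemma prod_local {D : Finset V} {u u' : ∀ v, vals v}
    (hfam : ∀ Y ∈ D, insert Y (Pa Y) ⊆ S)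
    (h : ∀ v ∈ S, u v = u' v) :
    (∏ Y ∈ D, kk Pa p Y u) = ∏ Y ∈ D, kk Pa p Y u' :=
  Finset.prod_congr rfl fun Y hY => kk_local (fun v hv => h v (hfam Y hY hv))

lemma ci_of_split (hnn : ∀ u, 0 ≤ p u) (hsum : ∑ u, p u = 1) (hacyc : Acyclic adj)
    (hPa : ∀ X v, v ∈ Pa X ↔ adj v X) (hfact : ∀ u, p u = ∏ X : V, kk Pa p X u)
    (U S T Z : Finset V) (M N : V) (hancU : Ancestral Pa U)
    (hST : S ∪ T = U) (hSTZ : S ∩ T = Z)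
    (hMS : M ∈ S) (hMT : M ∉ T) (hNT : N ∈ T) (hNS : N ∉ S)
    (hZW : Z ⊆ S ∩ T)
    (hfam : ∀ Y ∈ U, (insert Y (Pa Y) ⊆ S) ∨ (insert Y (Pa Y) ⊆ T)) :
    CI p {M} {N} Z := by
  have hSU : S ⊆ U := hST ▸ Finset.subset_union_left
  have hTU : T ⊆ U := hST ▸ Finset.subset_union_right
  have hMU : M ∈ U := hSU hMS
  have hNU : N ∈ U := hTU hNT
  have hZS : Z ⊆ S := fun v hv => (Finset.mem_inter.mp (hZW hv)).1
  have hZT : Z ⊆ T := fun v hv => (Finset.mem_inter.mp (hZW hv)).2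
  set DS : Finset V := U.filter (fun Y => insert Y (Pa Y) ⊆ S) with hDS
  set g : (∀ v, vals v) → ℝ := fun u => ∏ Y ∈ DS, kk Pa p Y u with hg
  set h : (∀ v, vals v) → ℝ := fun u => ∏ Y ∈ U.filter (fun Y => ¬ insert Y (Pa Y) ⊆ S),
    kk Pa p Y u with hh
  have hgloc : ∀ u u', (∀ v ∈ S, u v = u' v) → g u = g u' := by
    intro u u' huu
    exact prod_local (fun Y hY => (Finset.mem_filter.mp hY).2) huu
  have hhloc : ∀ u u', (∀ v ∈ T, u v = u' v) → h u = h u' := by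
    intro u u' huu
    refine prod_local (S := T) (fun Y hY => ?_) huu
    have hY' := Finset.mem_filter.mp hY
    exact (hfam Y hY'.1).resolve_left hY'.2
  have hU : ∀ u, Marg p U u = g u * h u := by
    intro u
    rw [marg_ancestral hnn hsum hacyc hPa hfact U hancU u]
    rw [hg, hh, hDS]
    exact (Finset.prod_filter_mul_prod_filter_not U _ _).symm
  -- the splitting of marginals
  have hsplit : ∀ (W : Finset V), Z ⊆ W → W ⊆ U → ∀ f,
      Marg p W f = SumOver (T \ W) h f * SumOver (S \ W) g f := by
    intro W hZW' hWU f
    have hUW : U \ W = (S \ W) ∪ (T \ W) := by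
      ext v
      simp only [Finset.mem_sdiff, Finset.mem_union]
      constructor
      · intro ⟨hvU, hvW⟩
        rcases Finset.mem_union.mp (hST ▸ hvU : v ∈ S ∪ T) with hv | hv
        · exact Or.inl ⟨hv, hvW⟩
        · exact Or.inr ⟨hv, hvW⟩
      · rintro (⟨hv, hvW⟩ | ⟨hv, hvW⟩)
        · exact ⟨hSU hv, hvW⟩
        · exact ⟨hTU hv, hvW⟩
    have hdisj : Disjoint (S \ W) (T \ W) := by
      rw [Finset.disjoint_left]
      rintro a ha ha'
      have h1 := Finset.mem_sdiff.mp ha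
      have h2 := Finset.mem_sdiff.mp ha'
      have : a ∈ Z := hSTZ ▸ Finset.mem_inter.mpr ⟨h1.1, h2.1⟩
      exact h1.2 (hZW' this)
    calc Marg p W f
        = SumOver (U \ W) (Marg p U) f := marg_marg hWU f
      _ = SumOver (U \ W) (fun u => g u * h u) f := sumover_congr hU f
      _ = SumOver ((S \ W) ∪ (T \ W)) (fun u => g u * h u) f := by rw [← hUW]
      _ = SumOver (S \ W) (fun u' => SumOver (T \ W) (fun u => g u * h u) u') f :=
          sumover_union hdisj _ f
      _ = SumOver (S \ W) (fun u' => SumOver (T \ W) h u' * g u') f := by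
          refine sumover_congr (fun u' => ?_) f
          have := sumover_pull (D := T \ W) (G := g) (F := h)
            (fun w w' hww => hgloc w w' (fun v hv => hww v (fun hmem => by
              have h2 := Finset.mem_sdiff.mp hmem
              have : v ∈ Z := hSTZ ▸ Finset.mem_inter.mpr ⟨hv, h2.1⟩
              exact h2.2 (hZW' this)))) u'
          rw [this, mul_comm]
      _ = SumOver (T \ W) h f * SumOver (S \ W) g f := by
          exact sumover_pull (D := S \ W) (G := fun u' => SumOver (T \ W) h u') (F := g)
            (fun w w' hww => sumover_local (B := T) hhloc (fun v hv hvmem => hww v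
              (fun hmem => by
                have h1 := Finset.mem_sdiff.mp hmem
                apply hvmem
                refine Finset.mem_sdiff.mpr ⟨hv, ?_⟩
                intro hvW
                exact h1.2 hvW))) f
  -- now the four instances
  intro f
  have hW1 : Marg p ({M} ∪ {N} ∪ Z) f
      = SumOver (T \ ({N} ∪ Z)) h f * SumOver (S \ ({M} ∪ Z)) g f := by
    have e := hsplit ({M} ∪ {N} ∪ Z) (fun v hv => by simp [hv]) (by
      intro v hv
      rcases Finset.mem_union.mp hv with hv | hv
      · rcases Finset.mem_union.mp hv with hv | hv
        · rw [Finset.mem_singleton.mp hv]; exact hMU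
        · rw [Finset.mem_singleton.mp hv]; exact hNU
      · exact hSU (hZS hv)) f
    have eS : S \ ({M} ∪ {N} ∪ Z) = S \ ({M} ∪ Z) := by
      ext v
      simp only [Finset.mem_sdiff, Finset.mem_union, Finset.mem_singleton]
      constructor
      · rintro ⟨hvS, hn⟩
        exact ⟨hvS, fun hc => hn (by tauto)⟩
      · rintro ⟨hvS, hn⟩
        refine ⟨hvS, fun hc => ?_⟩
        rcases hc with (hc | hc) | hc
        · exact hn (Or.inl hc)
        · subst hc; exact hNS hvS
        · exact hn (Or.inr hc)
    have eT : T \ ({M} ∪ {N} ∪ Z) = T \ ({N} ∪ Z) := by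
      ext v
      simp only [Finset.mem_sdiff, Finset.mem_union, Finset.mem_singleton]
      constructor
      · rintro ⟨hvT, hn⟩
        exact ⟨hvT, fun hc => hn (by tauto)⟩
      · rintro ⟨hvT, hn⟩
        refine ⟨hvT, fun hc => ?_⟩
        rcases hc with (hc | hc) | hc
        · subst hc; exact hMT hvT
        · exact hn (Or.inl hc)
        · exact hn (Or.inr hc)
    rw [eS, eT] at e
    exact e
  have hW2 : Marg p Z f = SumOver (T \ Z) h f * SumOver (S \ Z) g f :=
    hsplit Z (le_refl _) (fun v hv => hSU (hZS hv)) f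
  have hW3 : Marg p ({M} ∪ Z) f = SumOver (T \ Z) h f * SumOver (S \ ({M} ∪ Z)) g f := by
    have e := hsplit ({M} ∪ Z) (fun v hv => by simp [hv]) (by
      intro v hv
      rcases Finset.mem_union.mp hv with hv | hv
      · rw [Finset.mem_singleton.mp hv]; exact hMU
      · exact hSU (hZS hv)) f
    have eT : T \ ({M} ∪ Z) = T \ Z := by
      ext v
      simp only [Finset.mem_sdiff, Finset.mem_union, Finset.mem_singleton]
      constructor
      · rintro ⟨hvT, hn⟩
        exact ⟨hvT, fun hc => hn (Or.inr hc)⟩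
      · rintro ⟨hvT, hn⟩
        refine ⟨hvT, fun hc => ?_⟩
        rcases hc with hc | hc
        · subst hc; exact hMT hvT
        · exact hn hc
    rw [eT] at e
    exact e
  have hW4 : Marg p ({N} ∪ Z) f = SumOver (T \ ({N} ∪ Z)) h f * SumOver (S \ Z) g f := by
    have e := hsplit ({N} ∪ Z) (fun v hv => by simp [hv]) (by
      intro v hv
      rcases Finset.mem_union.mp hv with hv | hv
      · rw [Finset.mem_singleton.mp hv]; exact hNU
      · exact hSU (hZS hv)) f
    have eS : S \ ({N} ∪ Z) = S \ Z := by
      ext v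
      simp only [Finset.mem_sdiff, Finset.mem_union, Finset.mem_singleton]
      constructor
      · rintro ⟨hvS, hn⟩
        exact ⟨hvS, fun hc => hn (Or.inr hc)⟩
      · rintro ⟨hvS, hn⟩
        refine ⟨hvS, fun hc => ?_⟩
        rcases hc with hc | hc
        · subst hc; exact hNS hvS
        · exact hn hc
    rw [eS] at e
    exact e
  rw [hW1, hW2, hW3, hW4]
  ring

end PartA

section Walks

variable {V' : Type*} {adj : V' → V' → Prop} {Z : Finset V'}

/-- Undirected edge. -/
def E (adj : V' → V' → Prop) (a b : V') : Prop := adj a b ∨ adj b a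

/-- The triple `a - x - b` is "good": if `x` is a collider then it or a descendant is in `Z`,
otherwise `x ∉ Z`. -/
def goodT (adj : V' → V' → Prop) (Z : Finset V') (a x b : V') : Prop :=
  (adj a x ∧ adj b x → x ∈ Z ∨ ∃ d, Desc adj x d ∧ d ∈ Z) ∧
  (¬ (adj a x ∧ adj b x) → x ∉ Z)

/-- Every interior triple of the walk is good. -/
def Good (adj : V' → V' → Prop) (Z : Finset V') (p : List V') : Prop :=
  ∀ i a x b, 0 < i → p[i-1]? = some a → p[i]? = some x → p[i+1]? = some b → goodT adj Z a x b

def Ok (adj : V' → V' → Prop) (Z : Finset V') (p : List V') : Prop :=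
  p.Chain' (E adj) ∧ Good adj Z p

lemma no_self_adj (hacyc : Acyclic adj) (a : V') : ¬ adj a a :=
  fun h => hacyc a (Relation.TransGen.single h)

lemma no_two_cycle (hacyc : Acyclic adj) {a b : V'} (h1 : adj a b) (h2 : adj b a) : False :=
  hacyc a (Relation.TransGen.head h1 (Relation.TransGen.single h2))

lemma chain'_of_getElem? {R : V' → V' → Prop} {l : List V'}
    (h : ∀ (m : ℕ) a b, l[m]? = some a → l[m+1]? = some b → R a b) : l.Chain' R := by
  rw [show @List.Chain' = @List.IsChain from rfl, List.isChain_iff_getElem]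
  intro m hm
  exact h m _ _ (List.getElem?_eq_getElem (by omega)) (List.getElem?_eq_getElem (by omega))

lemma chain'_getElem? {R : V' → V' → Prop} {l : List V'} (hc : l.Chain' R)
    {m : ℕ} {a b : V'} (ha : l[m]? = some a) (hb : l[m+1]? = some b) : R a b := by
  obtain ⟨hm1, ha'⟩ := List.getElem?_eq_some_iff.mp ha
  obtain ⟨hm2, hb'⟩ := List.getElem?_eq_some_iff.mp hb
  subst ha'; subst hb'
  rw [show @List.Chain' = @List.IsChain from rfl, List.isChain_iff_getElem] at hc
  simpa using hc m (by omega)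

lemma ok_single (v : V') : Ok adj Z [v] := by
  constructor
  · simp [List.Chain', List.isChain_singleton]
  · intro i a x b hi ha hx hb
    have : i + 1 < 1 := by
      by_contra hh
      rw [List.getElem?_eq_none (by simpa using hh)] at hb
      exact absurd hb (by simp)
    omega

lemma ok_append_one {p : List V'} {v w : V'} (hp : Ok adj Z p) (hlast : p.getLast? = some v)
    (hE : E adj v w)
    (hgt : ∀ a, p[p.length - 2]? = some a → 2 ≤ p.length → goodT adj Z a v w) :
    Ok adj Z (p ++ [w]) ∧ (p ++ [w]).head? = p.head? ∧ (p ++ [w]).getLast? = some w ∧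
      (p ++ [w])[(p ++ [w]).length - 2]? = some v := by
  have hpne : p ≠ [] := by
    intro h; rw [h] at hlast; exact absurd hlast (by simp)
  have hlen : 1 ≤ p.length := List.length_pos_iff.mpr hpne
  have hlastElem : p[p.length - 1]? = some v := by
    rw [← List.getLast?_eq_getElem?]; exact hlast
  constructor; constructor
  · -- Chain'
    rw [show @List.Chain' = @List.IsChain from rfl, List.isChain_append]
    refine ⟨hp.1, List.isChain_singleton w, ?_⟩
    intro x hx y hy
    rw [hlast] at hx
    simp only [Option.mem_def, Option.some.injEq] at hx
    simp only [List.head?_cons, Option.mem_def, Option.some.injEq] at hy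
    subst hx; subst hy
    exact hE
  · -- Good
    intro i a x b hi ha hx hb
    have hlenq : (p ++ [w]).length = p.length + 1 := by simp
    have hib : i + 1 < p.length + 1 := by
      by_contra hh
      rw [List.getElem?_eq_none (by simp; omega)] at hb
      exact absurd hb (by simp)
    by_cases hcase : i + 1 < p.length
    · rw [List.getElem?_append_left (by omega)] at ha hx hb
      exact hp.2 i a x b hi ha hx hb
    · -- i + 1 = p.length
      have hieq : i + 1 = p.length := by omega
      have hxv : x = v := by
        rw [List.getElem?_append_left (by omega)] at hx
        have : p[i]? = some v := by rw [show i = p.length - 1 by omega] at hx ⊢; exact hlastElem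
        rw [hx] at this
        exact Option.some.inj this
      have hbw : b = w := by
        rw [show i + 1 = p.length + 0 by omega, List.getElem?_append_right (by omega)] at hb
        simp at hb
        exact hb.symm
      rw [List.getElem?_append_left (by omega)] at ha
      subst hxv hbw
      exact hgt a (by rw [show p.length - 2 = i - 1 by omega]; exact ha) (by omega)
  constructor
  · -- head?
    rcases p with _ | ⟨c, p'⟩
    · exact absurd rfl hpne
    · rfl
  constructor
  · -- getLast?
    simp
  · -- penultimate
    have : (p ++ [w]).length = p.length + 1 := by simp
    rw [this, show p.length + 1 - 2 = p.length - 1 by omega,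
      List.getElem?_append_left (by omega)]
    exact hlastElem

/-- Append a directed path leaving the end of a walk. -/
lemma ok_append_chain (hacyc : Acyclic adj) :
    ∀ (l : List V') (p : List V') (x y : V'), Ok adj Z p → p.getLast? = some y →
      p[p.length - 2]? = some x → 2 ≤ p.length →
      List.Chain' adj (y :: l) → y ∉ Z → (∀ z ∈ l, z ∉ Z) →
      Ok adj Z (p ++ l) ∧ (p ++ l).head? = p.head? ∧
        (p ++ l).getLast? = (y :: l).getLast? := by
  intro l
  induction l with
  | nil =>
    intro p x y hp hlast hpen hlen _ _ _
    rw [List.append_nil]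
    refine ⟨hp, rfl, ?_⟩
    simp [hlast]
  | cons w l' ih =>
    intro p x y hp hlast hpen hlen hchain hyZ hlZ
    have hadj : adj y w := List.isChain_cons_cons.mp hchain |>.1
    have hgt : goodT adj Z x y w := by
      constructor
      · intro ⟨_, hwy⟩
        exact absurd hwy (fun h => no_two_cycle hacyc hadj h)
      · intro _; exact hyZ
    obtain ⟨hok, hhead, hlast', hpen'⟩ := ok_append_one hp hlast (Or.inl hadj)
      (fun a ha _ => by rw [hpen] at ha; rw [← Option.some.inj ha]; exact hgt)
    have := ih (p ++ [w]) y w hok hlast' hpen' (by simp; omega)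
      (List.isChain_cons_cons.mp hchain |>.2) (hlZ w (by simp)) (fun z hz => hlZ z (by simp [hz]))
    rw [List.append_assoc p [w] l'] at this
    simp only [List.singleton_append] at this
    refine ⟨this.1, ?_, ?_⟩
    · rw [this.2.1, hhead]
    · rw [this.2.2]
      simp [List.getLast?_cons_cons]

/-- The reverse of a `Z`-free directed path is a good walk. -/
lemma ok_reverse_dir (hacyc : Acyclic adj) {l : List V'} (hc : List.Chain' adj l)
    (hZ : ∀ x ∈ l, x ∉ Z) : Ok adj Z l.reverse := by
  constructor
  · rw [show @List.Chain' = @List.IsChain from rfl, List.isChain_reverse]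
    exact hc.imp (fun a b h => Or.inr h)
  · intro i a x b hi ha hx hb
    have hn : l.reverse.length = l.length := by simp
    have hib : i + 1 < l.length := by
      by_contra hh
      rw [List.getElem?_eq_none (by omega)] at hb
      exact absurd hb (by simp)
    have hil : i < l.length := by omega
    rw [List.getElem?_reverse (by omega)] at ha hx hb
    -- a at l-index `l.length - i`, x at `l.length - 1 - i`, b at `l.length - 2 - i`
    have hxa : adj x a := by
      refine chain'_getElem? hc (m := l.length - 1 - i) ?_ ?_
      · exact hx
      · rw [show l.length - 1 - i + 1 = l.length - 1 - (i-1) by omega]; exact ha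
    constructor
    · intro ⟨hax, _⟩
      exact absurd hax (fun h => no_two_cycle hacyc h hxa)
    · intro _
      have : x ∈ l := by
        have := List.getElem?_eq_some_iff.mp hx
        obtain ⟨h1, h2⟩ := this
        exact h2 ▸ List.getElem_mem h1
      exact hZ x this

/-- From a directed run inside a walk, the start descends to the end. -/
lemma desc_of_run {p : List V'} {i : ℕ} {v : V'} (hpi : p[i]? = some v) :
    ∀ (m : ℕ) (x : V'),
      (∀ t a b, i ≤ t → t < i+1+m → p[t]? = some a → p[t+1]? = some b → adj a b) →
      p[i+1+m]? = some x → Desc adj v x := by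
  intro m
  induction m with
  | zero =>
    intro x hrun hx
    exact Relation.TransGen.single (hrun i v x (le_refl i) (by omega) hpi (by simpa using hx))
  | succ m ih =>
    intro x hrun hx
    have hmid : i + 1 + m < p.length := by
      have : i + 1 + (m+1) < p.length := by
        by_contra hh
        rw [List.getElem?_eq_none (by omega)] at hx
        exact absurd hx (by simp)
      omega
    have hmid' : p[i+1+m]? = some (p[i+1+m]'hmid) := List.getElem?_eq_getElem hmid
    refine Relation.TransGen.tail (ih _ (fun t a b ht ht' ha hb => hrun t a b ht (by omega) ha hb)
      hmid') ?_
    exact hrun (i+1+m) _ x (by omega) (by omega) hmid'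
      (by rw [show i+1+m+1 = i+1+(m+1) by omega]; exact hx)

/-- The forward-run lemma: if the walk leaves `v` at position `i` by a directed edge and
returns to `v` at position `j > i`, then `v` has a descendant in `Z`. -/
lemma run_lemma (hacyc : Acyclic adj) {p : List V'} (hp : Ok adj Z p) {i j : ℕ} {v : V'}
    (hij : i < j) (hpi : p[i]? = some v) (hpj : p[j]? = some v)
    (hstart : ∀ b, p[i+1]? = some b → adj v b) :
    ∃ d, Desc adj v d ∧ d ∈ Z := by
  have hjlen : j < p.length := by
    by_contra hh
    rw [List.getElem?_eq_none (by omega)] at hpj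
    exact absurd hpj (by simp)
  by_cases hex : ∃ t, i ≤ t ∧ t < j ∧
      ∃ a b, p[t]? = some a ∧ p[t+1]? = some b ∧ ¬ adj a b
  · -- there is a reversal; take the first one
    obtain ⟨hil, hlj, a, b, hpa, hpb, hnadj⟩ := Nat.find_spec hex
    set l := Nat.find hex with hl
    have hmin : ∀ t, t < l → ¬ (i ≤ t ∧ t < j ∧
        ∃ a b, p[t]? = some a ∧ p[t+1]? = some b ∧ ¬ adj a b) :=
      fun t ht => Nat.find_min hex ht
    have hrun : ∀ t c d, i ≤ t → t < l → p[t]? = some c → p[t+1]? = some d → adj c d := by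
      intro t c d ht htl hc hd
      by_contra hn
      exact hmin t htl ⟨ht, by omega, c, d, hc, hd, hn⟩
    have hlne : i < l := by
      rcases Nat.lt_or_ge i l with h | h
      · exact h
      · exfalso
        have : l = i := by omega
        rw [this] at hpa
        rw [hpi] at hpa
        rw [this] at hpb
        exact hnadj ((Option.some.inj hpa) ▸ hstart b hpb)
    have hlen1 : l - 1 < p.length := by omega
    have hc' : p[l-1]? = some (p[l-1]'hlen1) := List.getElem?_eq_getElem hlen1
    have hca : adj (p[l-1]'hlen1) a :=
      hrun (l-1) _ a (by omega) (by omega) hc' (by rw [show l-1+1 = l by omega]; exact hpa)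
    have hEab : E adj a b := chain'_getElem? hp.1 hpa hpb
    have hba : adj b a := hEab.resolve_left hnadj
    have hgt := hp.2 l _ a b (by omega) hc' hpa hpb
    have hcol := hgt.1 ⟨hca, hba⟩
    have hdesc : Desc adj v a := desc_of_run hpi (l-1-i) a
      (fun t c d ht ht' hc hd => hrun t c d ht (by omega) hc hd)
      (by rw [show i+1+(l-1-i) = l by omega]; exact hpa)
    rcases hcol with hZm | ⟨d, hd1, hd2⟩
    · exact ⟨a, hdesc, hZm⟩
    · exact ⟨d, Relation.TransGen.trans hdesc hd1, hd2⟩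
  · -- no reversal: directed cycle
    exfalso
    push_neg at hex
    have hrun : ∀ t c d, i ≤ t → t < i+1+(j-i-1) → p[t]? = some c → p[t+1]? = some d →
        adj c d := fun t c d ht htl hc hd => hex t ht (by omega) c d hc hd
    have : Desc adj v v := desc_of_run hpi (j-i-1) v hrun
      (by rw [show i+1+(j-i-1) = j by omega]; exact hpj)
    exact hacyc v this

lemma splice_step (hacyc : Acyclic adj) {p : List V'} (hp : Ok adj Z p) {i j : ℕ}
    (hij : i < j) (hjlen : j < p.length) (heq : p[i]? = p[j]?) :
    ∃ q : List V', Ok adj Z q ∧ q.head? = p.head? ∧ q.getLast? = p.getLast? ∧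
      q.length < p.length := by
  refine ⟨p.take (i+1) ++ p.drop (j+1), ?_⟩
  set q := p.take (i+1) ++ p.drop (j+1) with hq
  have hilen : i < p.length := by omega
  have hlenq : q.length = (i+1) + (p.length - (j+1)) := by
    rw [hq, List.length_append, List.length_take, List.length_drop]
    omega
  have hqlow : ∀ m, m ≤ i → q[m]? = p[m]? := by
    intro m hm
    rw [hq, List.getElem?_append_left (by rw [List.length_take]; omega),
      List.getElem?_take_of_lt (by omega)]
  have hqhigh : ∀ m, i+1 ≤ m → q[m]? = p[m + (j - i)]? := by
    intro m hm
    rw [hq, List.getElem?_append_right (by rw [List.length_take]; omega),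
      List.getElem?_drop]
    congr 1
    rw [List.length_take]
    omega
  have hv := heq
  -- the duplicated value
  have hpi : p[i]? = some (p[i]'hilen) := List.getElem?_eq_getElem hilen
  set v := p[i]'hilen with hvdef
  have hpj : p[j]? = some v := by rw [← heq]; exact hpi
  have hlenq_lt : q.length < p.length := by omega
  have hhead : q.head? = p.head? := by
    rw [List.head?_eq_getElem?, List.head?_eq_getElem?, hqlow 0 (by omega)]
  have hlast : q.getLast? = p.getLast? := by
    rw [List.getLast?_eq_getElem?, List.getLast?_eq_getElem?]
    by_cases hcase : j + 1 = p.length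
    · have h1 : q.length - 1 = i := by omega
      rw [h1, hqlow i (le_refl i), hpi, show p.length - 1 = j by omega, hpj]
    · have h1 : i + 1 ≤ q.length - 1 := by omega
      rw [hqhigh _ h1]
      congr 1
      omega
  -- chain
  have hchain : q.Chain' (E adj) := by
    apply chain'_of_getElem?
    intro m a b ha hb
    have hmb : m + 1 < q.length := by
      by_contra hh
      rw [List.getElem?_eq_none (by omega)] at hb
      exact absurd hb (by simp)
    by_cases hc1 : m + 1 ≤ i
    · rw [hqlow m (by omega)] at ha
      rw [hqlow (m+1) hc1] at hb
      exact chain'_getElem? hp.1 ha hb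
    · by_cases hc2 : m = i
      · subst hc2
        rw [hqlow m (le_refl m), hpi] at ha
        rw [hqhigh (m+1) (by omega)] at hb
        have : m + 1 + (j - m) = j + 1 := by omega
        rw [this] at hb
        have := chain'_getElem? hp.1 hpj hb
        rw [Option.some.inj ha] at this
        exact this
      · have hm1 : i + 1 ≤ m := by omega
        rw [hqhigh m hm1] at ha
        rw [hqhigh (m+1) (by omega)] at hb
        have : m + 1 + (j - i) = (m + (j-i)) + 1 := by omega
        rw [this] at hb
        exact chain'_getElem? hp.1 ha hb
  refine ⟨⟨hchain, ?_⟩, hhead, hlast, hlenq_lt⟩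
  -- goodness
  intro m a x b hm ha hx hb
  have hmb : m + 1 < q.length := by
    by_contra hh
    rw [List.getElem?_eq_none (by omega)] at hb
    exact absurd hb (by simp)
  by_cases hc1 : m + 1 ≤ i
  · rw [hqlow (m-1) (by omega)] at ha
    rw [hqlow m (by omega)] at hx
    rw [hqlow (m+1) hc1] at hb
    exact hp.2 m a x b hm ha hx hb
  · by_cases hc2 : m = i
    · -- the junction
      subst hc2
      rw [hqlow m (le_refl m), hpi] at hx
      have hxv : x = v := (Option.some.inj hx).symm
      subst hxv
      rw [hqlow (m-1) (by omega)] at ha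
      rw [hqhigh (m+1) (by omega), show m + 1 + (j - m) = j + 1 by omega] at hb
      -- a = p[m-1], x = v, b = p[j+1]
      have hEav : E adj a v := by
        refine chain'_getElem? hp.1 (m := m-1) ha ?_
        rw [show m - 1 + 1 = m by omega]
        exact hpi
      have hEvb : E adj v b := chain'_getElem? hp.1 hpj hb
      have hi1len : m + 1 ≤ j := by omega
      have hcp : p[m+1]? = some (p[m+1]'(by omega)) := List.getElem?_eq_getElem (by omega)
      by_cases hcol : adj a v ∧ adj b v
      · -- collider in the spliced walk
        refine ⟨fun _ => ?_, fun hn => absurd hcol hn⟩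
        by_cases hcv : adj (p[m+1]'(by omega : m+1 < p.length)) v
        · -- collider already in p at position m
          have hgt := hp.2 m a v _ hm ha hpi hcp
          exact hgt.1 ⟨hcol.1, hcv⟩
        · -- the walk leaves v at m by a directed edge: run lemma
          have hstart : ∀ c, p[m+1]? = some c → adj v c := by
            intro c hc
            rw [hcp] at hc
            have hEvc : E adj v (p[m+1]'(by omega : m+1 < p.length)) :=
              chain'_getElem? hp.1 hpi hcp
            rw [← Option.some.inj hc]
            exact hEvc.resolve_right hcv
          obtain ⟨d, hd1, hd2⟩ := run_lemma hacyc hp hij hpi hpj hstart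
          exact Or.inr ⟨d, hd1, hd2⟩
      · -- non-collider in the spliced walk: v ∉ Z
        refine ⟨fun hc => absurd hc hcol, fun _ => ?_⟩
        rcases Decidable.not_and_iff_or_not.mp hcol with hnav | hnbv
        · -- then adj v a, so p had a non-collider at position m
          have hgt := hp.2 m a v _ hm ha hpi hcp
          exact hgt.2 (fun hcc => hnav hcc.1)
        · -- then adj v b, so p had a non-collider at position j
          have hj1 : j - 1 < p.length := by omega
          have hcj : p[j-1]? = some (p[j-1]'hj1) := List.getElem?_eq_getElem hj1
          have hgt := hp.2 j _ v b (by omega) hcj hpj hb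
          exact hgt.2 (fun hcc => hnbv hcc.2)
    · -- strictly right of the junction
      have hm1 : i + 1 ≤ m := by omega
      rw [hqhigh m hm1] at hx
      rw [hqhigh (m+1) (by omega), show m + 1 + (j - i) = (m + (j-i)) + 1 by omega] at hb
      have hmj : 0 < m + (j - i) := by omega
      have ha' : p[(m + (j-i)) - 1]? = some a := by
        by_cases hmi : m - 1 = i
        · rw [hqlow (m-1) (by omega)] at ha
          rw [hmi] at ha
          rw [show m + (j - i) - 1 = j by omega, ← heq]
          exact ha
        · rw [hqhigh (m-1) (by omega)] at ha
          rw [show m + (j-i) - 1 = m - 1 + (j - i) by omega]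
          exact ha
      exact hp.2 (m + (j-i)) a x b hmj ha' hx hb

/-- Every good walk contains a good trail with the same endpoints. -/
lemma walk_to_trail (hacyc : Acyclic adj) :
    ∀ (n : ℕ) (p : List V'), p.length ≤ n → Ok adj Z p →
      ∃ q, Ok adj Z q ∧ q.head? = p.head? ∧ q.getLast? = p.getLast? ∧ q.Nodup := by
  intro n
  induction n with
  | zero =>
    intro p hlen hp
    have : p = [] := List.length_eq_zero_iff.mp (by omega)
    subst this
    exact ⟨[], hp, rfl, rfl, List.nodup_nil⟩
  | succ n ih =>
    intro p hlen hp
    by_cases hnd : p.Nodup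
    · exact ⟨p, hp, rfl, rfl, hnd⟩
    · have hninj : ¬ Function.Injective p.get := fun h =>
        hnd (List.nodup_iff_injective_get.mpr h)
      rw [Function.not_injective_iff] at hninj
      obtain ⟨a, b, hab, hne⟩ := hninj
      have heq' : p[(a : ℕ)]? = p[(b : ℕ)]? := by
        rw [List.getElem?_eq_getElem a.isLt, List.getElem?_eq_getElem b.isLt]
        simpa using hab
      have hvne : (a : ℕ) ≠ (b : ℕ) := fun h => hne (Fin.ext h)
      rcases Nat.lt_or_ge (a : ℕ) (b : ℕ) with hlt | hge
      · obtain ⟨q, hq, h1, h2, h3⟩ := splice_step hacyc hp hlt b.isLt heq'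
        obtain ⟨r, hr, r1, r2, r3⟩ := ih q (by omega) hq
        exact ⟨r, hr, by rw [r1, h1], by rw [r2, h2], r3⟩
      · have hlt : (b : ℕ) < (a : ℕ) := by omega
        obtain ⟨q, hq, h1, h2, h3⟩ := splice_step hacyc hp hlt a.isLt heq'.symm
        obtain ⟨r, hr, r1, r2, r3⟩ := ih q (by omega) hq
        exact ⟨r, hr, by rw [r1, h1], by rw [r2, h2], r3⟩

lemma good_not_blocked {q : List V'} (hg : Good adj Z q) : ¬ Blocked adj (↑Z) q := by
  rintro ⟨i, x, h0, hlen, hx, hdisj⟩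
  have hi1 : i - 1 < q.length := by omega
  have ha : q[i-1]? = some (q[i-1]'hi1) := List.getElem?_eq_getElem hi1
  have hb : q[i+1]? = some (q[i+1]'hlen) := List.getElem?_eq_getElem hlen
  have hgt := hg i _ x _ h0 ha hx hb
  have hcol_iff : ColliderAt adj q i ↔ adj (q[i-1]'hi1) x ∧ adj (q[i+1]'hlen) x := by
    constructor
    · rintro ⟨a', x', b', ha', hx', hb', h1, h2⟩
      rw [ha] at ha'
      rw [hx] at hx'
      rw [hb] at hb'
      rw [Option.some.inj ha', Option.some.inj hx', Option.some.inj hb'] at *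
      exact ⟨h1, h2⟩
    · intro hh
      exact ⟨_, x, _, ha, hx, hb, hh.1, hh.2⟩
  rcases hdisj with h | h
  · exact (hgt.2 (fun hc => h.1 (hcol_iff.mpr hc))) (Finset.mem_coe.mp h.2)
  · rcases hgt.1 (hcol_iff.mp h.1) with hz | ⟨d, hd1, hd2⟩
    · exact h.2.1 (Finset.mem_coe.mpr hz)
    · exact h.2.2 d hd1 (Finset.mem_coe.mpr hd2)

/-- From a good walk between distinct endpoints, extract an unblocked trail. -/
lemma to_trail (hacyc : Acyclic adj) {p : List V'} {M N : V'} (hp : Ok adj Z p)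
    (hh : p.head? = some M) (hl : p.getLast? = some N) (hMN : M ≠ N) :
    ∃ q, IsTrail adj q M N ∧ ¬ Blocked adj (↑Z) q := by
  obtain ⟨q, hq, h1, h2, h3⟩ := walk_to_trail hacyc p.length p (le_refl _) hp
  rw [hh] at h1
  rw [hl] at h2
  have hne : q ≠ [] := by
    intro h
    rw [h] at h1
    exact absurd h1 (by simp)
  have hlen : 2 ≤ q.length := by
    rcases Nat.lt_or_ge q.length 2 with h | h
    · exfalso
      have h1' : q.length = 1 := by
        have := List.length_pos_iff.mpr hne
        omega
      obtain ⟨c, hc⟩ := List.length_eq_one_iff.mp h1'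
      rw [hc] at h1 h2
      simp only [List.head?_cons, Option.some.injEq] at h1
      simp only [List.getLast?_singleton, Option.some.injEq] at h2
      exact hMN (by rw [← h1, ← h2])
    · exact h
  exact ⟨q, ⟨hq.1, h1, h2, h3, hlen⟩, good_not_blocked hq.2⟩

lemma ok_pair {a b : V'} (hE : E adj a b) : Ok adj Z [a, b] := by
  constructor
  · exact List.isChain_cons_cons.mpr ⟨hE, List.isChain_singleton b⟩
  · intro i c x d hi hc hx hd
    have : i + 1 < 2 := by
      by_contra hh
      rw [List.getElem?_eq_none (by simp; omega)] at hd
      exact absurd hd (by simp)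
    omega

lemma chain_desc : ∀ (l : List V') (c : V'), List.Chain' adj (c :: l) →
    ∀ z ∈ l, Desc adj c z := by
  intro l
  induction l with
  | nil => intro c _ z hz; exact absurd hz (by simp)
  | cons x l' ih =>
    intro c hc z hz
    have hcx : adj c x := (List.isChain_cons_cons.mp hc).1
    rcases List.mem_cons.mp hz with rfl | hz'
    · exact Relation.TransGen.single hcx
    · exact Relation.TransGen.head hcx (ih x (List.isChain_cons_cons.mp hc).2 z hz')

lemma desc_path {c t : V'} (hdesc : Desc adj c t) :
    ∃ e l', adj c e ∧ List.Chain' adj (c :: e :: l') ∧ (c :: e :: l').getLast? = some t := by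
  induction hdesc with
  | single h =>
    exact ⟨_, [], h, List.isChain_cons_cons.mpr ⟨h, List.isChain_singleton _⟩, rfl⟩
  | @tail b' c' hab hbc ih =>
    obtain ⟨e, l', hce, hchain, hlast⟩ := ih
    refine ⟨e, l' ++ [c'], hce, ?_, ?_⟩
    · rw [show c :: e :: (l' ++ [c']) = (c :: e :: l') ++ [c'] by simp]
      rw [show @List.Chain' = @List.IsChain from rfl, List.isChain_append]
      refine ⟨hchain, List.isChain_singleton _, ?_⟩
      intro x hx y hy
      rw [hlast] at hx
      simp only [Option.mem_def, Option.some.injEq] at hx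
      simp only [List.head?_cons, Option.mem_def, Option.some.injEq] at hy
      subst hx; subst hy
      exact hbc
    · rw [show c :: e :: (l' ++ [c']) = (c :: e :: l') ++ [c'] by simp]
      rw [List.getLast?_concat]

/-- Moral-graph adjacency relative to an ancestral set `U`, avoiding `Z`. -/
def MAdj (adj : V' → V' → Prop) (U Z : Finset V') (a b : V') : Prop :=
  a ∈ U ∧ b ∈ U ∧ a ∉ Z ∧ b ∉ Z ∧
    (adj a b ∨ adj b a ∨ ∃ c ∈ U, adj a c ∧ adj b c)

/-- There is no `Z`-avoiding moral path from `M` to `N` inside the ancestral set. -/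
lemma no_moral_path {U : Finset V'} {M N : V'} (hacyc : Acyclic adj)
    (hU : ∀ c ∈ U, c = M ∨ c = N ∨ c ∈ Z ∨ Desc adj c M ∨ Desc adj c N ∨ ∃ z ∈ Z, Desc adj c z)
    (hM : M ∉ Z) (hN : N ∉ Z)
    (contra : ∀ p : List V', Ok adj Z p → p.head? = some M → p.getLast? = some N → False) :
    ¬ Relation.ReflTransGen (MAdj adj U Z) M N := by
  intro hRTG
  -- `Z`-free directed path or ancestor of `Z`
  have dich : ∀ c t, c ∉ Z → t ∉ Z → Desc adj c t → (∃ z ∈ Z, Desc adj c z) ∨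
      ∃ e l', adj c e ∧ List.Chain' adj (c :: e :: l') ∧ (c :: e :: l').getLast? = some t ∧
        (∀ x ∈ c :: e :: l', x ∉ Z) := by
    intro c t hcZ htZ hdesc
    obtain ⟨e, l', hce, hchain, hlast⟩ := desc_path hdesc
    by_cases hhit : ∃ z ∈ e :: l', z ∈ Z
    · obtain ⟨z, hz1, hz2⟩ := hhit
      exact Or.inl ⟨z, hz2, chain_desc _ _ hchain z hz1⟩
    · push_neg at hhit
      refine Or.inr ⟨e, l', hce, hchain, hlast, ?_⟩
      intro x hx
      rcases List.mem_cons.mp hx with rfl | hx'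
      · exact hcZ
      · exact hhit x hx'
  -- appending one vertex to a walk
  have append1 : ∀ (p : List V') (b w : V'), Ok adj Z p → p.head? = some M →
      p.getLast? = some b → E adj b w →
      ((p = [M] ∧ b = M) ∨ ∃ a, p[p.length-2]? = some a ∧ 2 ≤ p.length ∧ goodT adj Z a b w) →
      ∃ q, Ok adj Z q ∧ q.head? = some M ∧ q.getLast? = some w ∧
        q[q.length-2]? = some b ∧ 2 ≤ q.length := by
    intro p b w hp hh hl hE hcase
    rcases hcase with ⟨rfl, rfl⟩ | ⟨a, hpen, hlen2, hgt⟩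
    · refine ⟨[b, w], ok_pair hE, ?_, rfl, rfl, by simp⟩
      simpa using hh
    · obtain ⟨hok, hhead, hlast, hpen'⟩ := ok_append_one hp hl hE
        (fun a' ha' _ => by rw [hpen] at ha'; rw [← Option.some.inj ha']; exact hgt)
      refine ⟨p ++ [w], hok, by rw [hhead]; exact hh, hlast, hpen', by simp; omega⟩
  -- resetting the walk to a reversed directed path ending at `b`
  have reset : ∀ b, b ∉ Z → (b = M ∨ Desc adj b M) → (∃ z ∈ Z, Desc adj b z) ∨
      ∃ p, Ok adj Z p ∧ p.head? = some M ∧ p.getLast? = some b ∧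
        ((p = [M] ∧ b = M) ∨ ∃ e, p[p.length-2]? = some e ∧ 2 ≤ p.length ∧ adj b e) := by
    intro b hbZ hbM
    rcases hbM with rfl | hdesc
    · exact Or.inr ⟨[b], ok_single b, rfl, rfl, Or.inl ⟨rfl, rfl⟩⟩
    · rcases dich b M hbZ hM hdesc with hAnZ | ⟨e, l', hbe, hchain, hlast, hZfree⟩
      · exact Or.inl hAnZ
      · refine Or.inr ⟨(b :: e :: l').reverse, ok_reverse_dir hacyc hchain hZfree, ?_, ?_,
          Or.inr ⟨e, ?_, ?_, hbe⟩⟩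
        · rw [List.head?_reverse]; exact hlast
        · rw [List.getLast?_reverse]; rfl
        · have hlenr : (b :: e :: l').reverse.length = l'.length + 2 := by simp
          rw [List.getElem?_reverse (by rw [hlenr]; simp only [List.length_cons]; omega), hlenr]
          rw [show (b :: e :: l').length - 1 - (l'.length + 2 - 2) = 1 by
            simp only [List.length_cons]; omega]
          simp
        · simp
  -- finishing the walk by a directed path to `N`
  have finishW : ∀ (p : List V') (b : V'), Ok adj Z p → p.head? = some M →
      p.getLast? = some b → 2 ≤ p.length → b ∉ Z → (b = N ∨ Desc adj b N) →
      (∃ z ∈ Z, Desc adj b z) := by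
    intro p b hp hh hl hlen2 hbZ hbN
    rcases hbN with rfl | hdesc
    · exact absurd hl (fun hl => contra p hp hh hl)
    · rcases dich b N hbZ hN hdesc with hAnZ | ⟨e, l', hbe, hchain, hlast, hZfree⟩
      · exact hAnZ
      · exfalso
        have hpen : p[p.length-2]? = some (p[p.length-2]'(by omega)) :=
          List.getElem?_eq_getElem (by omega)
        obtain ⟨hok, hhead, hlast'⟩ := ok_append_chain hacyc (e :: l') p _ b hp hl hpen hlen2
          hchain hbZ (fun z hz => hZfree z (List.mem_cons_of_mem b hz))
        refine contra (p ++ e :: l') hok (by rw [hhead]; exact hh) ?_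
        rw [hlast']
        exact hlast
  -- the trichotomy for vertices of `U`
  have tri : ∀ b ∈ U, b ∉ Z → (∃ z ∈ Z, Desc adj b z) ∨ (b = M ∨ Desc adj b M) ∨
      (b = N ∨ Desc adj b N) := by
    intro b hbU hbZ
    rcases hU b hbU with rfl | rfl | h | h | h | h
    · exact Or.inr (Or.inl (Or.inl rfl))
    · exact Or.inr (Or.inr (Or.inl rfl))
    · exact absurd h hbZ
    · exact Or.inr (Or.inl (Or.inr h))
    · exact Or.inr (Or.inr (Or.inr h))
    · exact Or.inl h
  -- main induction along the moral path
  have main : ∀ v, Relation.ReflTransGen (MAdj adj U Z) M v →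
      ∃ p, Ok adj Z p ∧ p.head? = some M ∧ p.getLast? = some v ∧
        ((p = [M] ∧ v = M) ∨ ∃ a, p[p.length-2]? = some a ∧ 2 ≤ p.length) := by
    intro v hv
    induction hv with
    | refl => exact ⟨[M], ok_single M, rfl, rfl, Or.inl ⟨rfl, rfl⟩⟩
    | @tail b c hsteps hstep ih =>
      obtain ⟨p, hp, hh, hl, hinv⟩ := ih
      obtain ⟨hbU, hcU, hbZ, hcZ, hedge⟩ := hstep
      -- helper: append `c` via a good triple when the walk is nontrivial
      rcases hedge with hd | hd | ⟨d, hdU, hbd, hcd⟩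
      case _ | _ =>
        -- direct edge between b and c
        have hE : E adj b c := by
          first
          | exact Or.inl hd
          | exact Or.inr hd
        rcases hinv with ⟨rfl, rfl⟩ | ⟨a, hpen, hlen2⟩
        · obtain ⟨q, h1, h2, h3, h4, h5⟩ := append1 [b] b c hp hh hl hE (Or.inl ⟨rfl, rfl⟩)
          exact ⟨q, h1, h2, h3, Or.inr ⟨b, h4, h5⟩⟩
        · by_cases hcol : adj a b ∧ adj c b
          · -- b is a collider on the extended walk
            have hbZcase : (∃ z ∈ Z, Desc adj b z) → ∃ q, Ok adj Z q ∧ q.head? = some M ∧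
                q.getLast? = some c ∧ ((q = [M] ∧ c = M) ∨
                  ∃ a', q[q.length-2]? = some a' ∧ 2 ≤ q.length) := by
              rintro ⟨z, hz1, hz2⟩
              obtain ⟨q, h1, h2, h3, h4, h5⟩ := append1 p b c hp hh hl hE
                (Or.inr ⟨a, hpen, hlen2, fun _ => Or.inr ⟨z, hz2, hz1⟩,
                  fun hn => absurd hcol hn⟩)
              exact ⟨q, h1, h2, h3, Or.inr ⟨b, h4, h5⟩⟩
            rcases tri b hbU hbZ with hAnZ | hbM | hbN
            · exact hbZcase hAnZ
            · rcases reset b hbZ hbM with hAnZ | ⟨p', h1, h2, h3, hinv'⟩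
              · exact hbZcase hAnZ
              · rcases hinv' with ⟨rfl, rfl⟩ | ⟨e, hpen', hlen2', hbe⟩
                · obtain ⟨q, g1, g2, g3, g4, g5⟩ := append1 [b] b c h1 h2 h3 hE
                    (Or.inl ⟨rfl, rfl⟩)
                  exact ⟨q, g1, g2, g3, Or.inr ⟨b, g4, g5⟩⟩
                · obtain ⟨q, g1, g2, g3, g4, g5⟩ := append1 p' b c h1 h2 h3 hE
                    (Or.inr ⟨e, hpen', hlen2',
                      fun hcc => absurd hcc.1 (fun h => no_two_cycle hacyc h hbe),
                      fun _ => hbZ⟩)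
                  exact ⟨q, g1, g2, g3, Or.inr ⟨b, g4, g5⟩⟩
            · exact hbZcase (finishW p b hp hh hl hlen2 hbZ hbN)
          · -- b is not a collider
            obtain ⟨q, h1, h2, h3, h4, h5⟩ := append1 p b c hp hh hl hE
              (Or.inr ⟨a, hpen, hlen2, fun hcc => absurd hcc hcol, fun _ => hbZ⟩)
            exact ⟨q, h1, h2, h3, Or.inr ⟨b, h4, h5⟩⟩
      · -- marriage via a common child d
        have hq1 : ∃ q, Ok adj Z q ∧ q.head? = some M ∧ q.getLast? = some d ∧
            q[q.length-2]? = some b ∧ 2 ≤ q.length := by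
          rcases hinv with ⟨rfl, rfl⟩ | ⟨a, hpen, hlen2⟩
          · exact append1 [b] b d hp hh hl (Or.inl hbd) (Or.inl ⟨rfl, rfl⟩)
          · exact append1 p b d hp hh hl (Or.inl hbd)
              (Or.inr ⟨a, hpen, hlen2,
                fun hcc => absurd hcc.2 (fun h => no_two_cycle hacyc hbd h),
                fun _ => hbZ⟩)
        obtain ⟨q1, k1, k2, k3, k4, k5⟩ := hq1
        -- now append c through the collider d
        have hgoodcase : (d ∈ Z ∨ ∃ z ∈ Z, Desc adj d z) → ∃ q, Ok adj Z q ∧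
            q.head? = some M ∧ q.getLast? = some c ∧ ((q = [M] ∧ c = M) ∨
              ∃ a', q[q.length-2]? = some a' ∧ 2 ≤ q.length) := by
          intro hdZ
          have hgt : goodT adj Z b d c := by
            refine ⟨fun _ => ?_, fun hn => absurd ⟨hbd, hcd⟩ hn⟩
            rcases hdZ with h | ⟨z, hz1, hz2⟩
            · exact Or.inl h
            · exact Or.inr ⟨z, hz2, hz1⟩
          obtain ⟨q, g1, g2, g3, g4, g5⟩ := append1 q1 d c k1 k2 k3 (Or.inr hcd)
            (Or.inr ⟨b, k4, k5, hgt⟩)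
          exact ⟨q, g1, g2, g3, Or.inr ⟨d, g4, g5⟩⟩
        by_cases hdZ : d ∈ Z
        · exact hgoodcase (Or.inl hdZ)
        · rcases tri d hdU hdZ with hAnZ | hdM | hdN
          · exact hgoodcase (Or.inr hAnZ)
          · rcases reset d hdZ hdM with hAnZ | ⟨p', h1, h2, h3, hinv'⟩
            · exact hgoodcase (Or.inr hAnZ)
            · rcases hinv' with ⟨rfl, rfl⟩ | ⟨e, hpen', hlen2', hde⟩
              · obtain ⟨q, g1, g2, g3, g4, g5⟩ := append1 [d] d c h1 h2 h3 (Or.inr hcd)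
                  (Or.inl ⟨rfl, rfl⟩)
                exact ⟨q, g1, g2, g3, Or.inr ⟨d, g4, g5⟩⟩
              · obtain ⟨q, g1, g2, g3, g4, g5⟩ := append1 p' d c h1 h2 h3 (Or.inr hcd)
                  (Or.inr ⟨e, hpen', hlen2',
                    fun hcc => absurd hcc.1 (fun h => no_two_cycle hacyc h hde),
                    fun _ => hdZ⟩)
                exact ⟨q, g1, g2, g3, Or.inr ⟨d, g4, g5⟩⟩
          · exact hgoodcase (Or.inr (finishW q1 d k1 k2 k3 k5 hdZ hdN))
  obtain ⟨p, hp, hh, hl, _⟩ := main N hRTG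
  exact contra p hp hh hl

end Walks

end DSound

open DSound

/-- Soundness of d-separation: if the joint distribution `p` over
finitely many finite-valued variables factorizes according to the DAG (Markov condition),
then `Z` d-separating `M` and `N` implies `M ⊥ N | Z` in `p`. -/
theorem dsep_soundness
    {V : Type*} [Fintype V] [DecidableEq V] {vals : V → Type*} [∀ v, Fintype (vals v)]
    (adj : V → V → Prop) (hacyc : Acyclic adj)
    (p : (∀ v, vals v) → ℝ) (hnn : ∀ u, 0 ≤ p u) (hsum : ∑ u, p u = 1)
    (Pa : V → Finset V) (hPa : ∀ X v, v ∈ Pa X ↔ adj v X)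
    (hfact : ∀ u, p u = ∏ X : V, Marg p (insert X (Pa X)) u / Marg p (Pa X) u)
    (M N : V) (Z : Finset V) (hM : M ∉ Z) (hN : N ∉ Z) (hMN : M ≠ N)
    (hsep : DSep adj (↑Z) M N) :
    CI p {M} {N} Z := by
  classical
  have hfact' : ∀ u, p u = ∏ X : V, kk Pa p X u := hfact
  -- the ancestral closure of {M, N} ∪ Z
  set U : Finset V := Finset.univ.filter (fun v => v = M ∨ v = N ∨ v ∈ Z ∨
    Desc adj v M ∨ Desc adj v N ∨ ∃ z ∈ Z, Desc adj v z) with hUdef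
  have hmemU : ∀ v, v ∈ U ↔ (v = M ∨ v = N ∨ v ∈ Z ∨
      Desc adj v M ∨ Desc adj v N ∨ ∃ z ∈ Z, Desc adj v z) := by
    intro v
    rw [hUdef, Finset.mem_filter]
    simp
  have hMU : M ∈ U := (hmemU M).mpr (Or.inl rfl)
  have hNU : N ∈ U := (hmemU N).mpr (Or.inr (Or.inl rfl))
  have hZU : Z ⊆ U := fun z hz => (hmemU z).mpr (Or.inr (Or.inr (Or.inl hz)))
  have hancU : Ancestral Pa U := by
    intro Y hY v hv
    have hadj : adj v Y := (hPa Y v).mp hv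
    rcases (hmemU Y).mp hY with rfl | rfl | h | h | h | ⟨z, hz, hdz⟩
    · exact (hmemU v).mpr (Or.inr (Or.inr (Or.inr (Or.inl (Relation.TransGen.single hadj)))))
    · exact (hmemU v).mpr (Or.inr (Or.inr (Or.inr (Or.inr (Or.inl
        (Relation.TransGen.single hadj))))))
    · exact (hmemU v).mpr (Or.inr (Or.inr (Or.inr (Or.inr (Or.inr
        ⟨Y, h, Relation.TransGen.single hadj⟩)))))
    · exact (hmemU v).mpr (Or.inr (Or.inr (Or.inr (Or.inl (Relation.TransGen.head hadj h)))))
    · exact (hmemU v).mpr (Or.inr (Or.inr (Or.inr (Or.inr (Or.inl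
        (Relation.TransGen.head hadj h))))))
    · exact (hmemU v).mpr (Or.inr (Or.inr (Or.inr (Or.inr (Or.inr
        ⟨z, hz, Relation.TransGen.head hadj hdz⟩)))))
  -- no unblocked trail exists
  have contra : ∀ q : List V, Ok adj Z q → q.head? = some M → q.getLast? = some N → False := by
    intro q hq hh hl
    obtain ⟨r, htrail, hnb⟩ := to_trail hacyc hq hh hl hMN
    exact hnb (hsep r htrail)
  -- the moral-reachable set
  set R : Finset V := Finset.univ.filter (fun v =>
    Relation.ReflTransGen (MAdj adj U Z) M v ∧ v ∈ U ∧ v ∉ Z) with hRdef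
  have hmemR : ∀ v, v ∈ R ↔ (Relation.ReflTransGen (MAdj adj U Z) M v ∧ v ∈ U ∧ v ∉ Z) := by
    intro v
    rw [hRdef, Finset.mem_filter]
    simp
  have hMR : M ∈ R := (hmemR M).mpr ⟨Relation.ReflTransGen.refl, hMU, hM⟩
  have hNR : N ∉ R := by
    intro hn
    obtain ⟨hRTG, _, _⟩ := (hmemR N).mp hn
    exact no_moral_path hacyc (fun c hc => (hmemU c).mp hc) hM hN contra hRTG
  have hRU : R ⊆ U := fun v hv => ((hmemR v).mp hv).2.1
  have hRZ : ∀ v ∈ R, v ∉ Z := fun v hv => ((hmemR v).mp hv).2.2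
  -- the two sides
  set Sf : Finset V := Z ∪ R with hSdef
  set Tf : Finset V := U \ R with hTdef
  have hST : Sf ∪ Tf = U := by
    ext v
    rw [hSdef, hTdef]
    simp only [Finset.mem_union, Finset.mem_sdiff]
    constructor
    · rintro ((h | h) | ⟨h, _⟩)
      · exact hZU h
      · exact hRU h
      · exact h
    · intro hv
      by_cases hvR : v ∈ R
      · exact Or.inl (Or.inr hvR)
      · exact Or.inr ⟨hv, hvR⟩
  have hSTZ : Sf ∩ Tf = Z := by
    ext v
    rw [hSdef, hTdef]
    simp only [Finset.mem_inter, Finset.mem_union, Finset.mem_sdiff]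
    constructor
    · rintro ⟨h | h, _, hvR⟩
      · exact h
      · exact absurd h hvR
    · intro hv
      exact ⟨Or.inl hv, hZU hv, fun hvR => hRZ v hvR hv⟩
  have hMS : M ∈ Sf := by rw [hSdef]; exact Finset.mem_union_right _ hMR
  have hMT : M ∉ Tf := by
    rw [hTdef]
    intro h
    exact (Finset.mem_sdiff.mp h).2 hMR
  have hNT : N ∈ Tf := by rw [hTdef]; exact Finset.mem_sdiff.mpr ⟨hNU, hNR⟩
  have hNS : N ∉ Sf := by
    rw [hSdef]
    intro h
    rcases Finset.mem_union.mp h with h | h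
    · exact hN h
    · exact hNR h
  have hZW : Z ⊆ Sf ∩ Tf := hSTZ ▸ le_refl Z
  -- families do not cross the cut
  have hfam : ∀ Y ∈ U, (insert Y (Pa Y) ⊆ Sf) ∨ (insert Y (Pa Y) ⊆ Tf) := by
    intro Y hY
    have hFU : insert Y (Pa Y) ⊆ U := Finset.insert_subset hY (hancU Y hY)
    by_cases hex : ∃ r ∈ insert Y (Pa Y), r ∈ R
    · obtain ⟨r, hrF, hrR⟩ := hex
      left
      intro t htF
      rw [hSdef, Finset.mem_union]
      by_cases htZ : t ∈ Z
      · exact Or.inl htZ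
      · right
        by_cases hrt : r = t
        · exact hrt ▸ hrR
        · have hedge : adj r t ∨ adj t r ∨ ∃ c ∈ U, adj r c ∧ adj t c := by
            rcases Finset.mem_insert.mp hrF with rfl | hrPa
            · rcases Finset.mem_insert.mp htF with rfl | htPa
              · exact absurd rfl hrt
              · exact Or.inr (Or.inl ((hPa r t).mp htPa))
            · rcases Finset.mem_insert.mp htF with rfl | htPa
              · exact Or.inl ((hPa t r).mp hrPa)
              · exact Or.inr (Or.inr ⟨Y, hY, (hPa Y r).mp hrPa, (hPa Y t).mp htPa⟩)
          have hstep : MAdj adj U Z r t :=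
            ⟨hRU hrR, hFU htF, hRZ r hrR, htZ, hedge⟩
          exact (hmemR t).mpr ⟨Relation.ReflTransGen.tail ((hmemR r).mp hrR).1 hstep,
            hFU htF, htZ⟩
    · push_neg at hex
      right
      intro t htF
      rw [hTdef]
      exact Finset.mem_sdiff.mpr ⟨hFU htF, hex t htF⟩
  exact ci_of_split hnn hsum hacyc hPa hfact' U Sf Tf Z M N hancU hST hSTZ hMS hMT hNT hNS
    hZW hfam
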